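/- Tropical Jensen formula: for any tropical meromorphic function f, T(r, f) − T(r, −f) = f(0) for all r ≥ 0. -/

import Mathlib

open Set Filter

/-- A tropical meromorphic function: a continuous piecewise linear real function, i.e.
a continuous function that is affine on a one-sided neighbourhood of every point. -/
def TropMero (f : ℝ → ℝ) : Prop :=
  Continuous f ∧ ∀ x : ℝ, ∃ ε > (0 : ℝ),
    (∃ a b : ℝ, ∀ y ∈ Set.Ico x (x + ε), f y = a * y + b) ∧
    (∃ a b : ℝ, ∀ y ∈ Set.Ioc (x - ε) x, f y = a * y + b)

/-- `ω_f(x)`: the jump of the derivative of `f` at `x` (right slope minus left slope).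
`x` is a root of `f` if `ω_f(x) > 0` and a pole if `ω_f(x) < 0`. -/
noncomputable def omega (f : ℝ → ℝ) (x : ℝ) : ℝ :=
  derivWithin f (Set.Ici x) x - derivWithin f (Set.Iic x) x

/-- A tropical entire function: a tropical meromorphic function without poles,
equivalently a convex one. -/
def TropEntire (f : ℝ → ℝ) : Prop := TropMero f ∧ ConvexOn ℝ Set.univ f

/-- The tropical proximity function `m(r, f) = (f⁺(r) + f⁺(-r))/2`. -/
noncomputable def mProx (f : ℝ → ℝ) (r : ℝ) : ℝ := (max (f r) 0 + max (f (-r)) 0) / 2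

/-- The unintegrated counting function `n(t, f) = Σ_{|s| ≤ t, ω_f(s) < 0} |ω_f(s)|`. -/
noncomputable def nCount (f : ℝ → ℝ) (t : ℝ) : ℝ :=
  ∑ᶠ s ∈ {s : ℝ | |s| ≤ t ∧ omega f s < 0}, |omega f s|

/-- The tropical counting function `N(r, f) = (1/2) ∫₀^r n(t, f) dt`. -/
noncomputable def NCount (f : ℝ → ℝ) (r : ℝ) : ℝ := (1 / 2) * ∫ t in (0 : ℝ)..r, nCount f t

/-- The tropical Nevanlinna characteristic `T(r, f) = m(r, f) + N(r, f)`. -/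
noncomputable def Tchar (f : ℝ → ℝ) (r : ℝ) : ℝ := mProx f r + NCount f r

section JensenAux

private lemma max_sub_max_neg (x : ℝ) : max x 0 - max (-x) 0 = x := by
  rcases le_total x 0 with h | h
  · rw [max_eq_right h, max_eq_left (neg_nonneg.mpr h)]; ring
  · rw [max_eq_left h, max_eq_right (neg_nonpos.mpr h)]; ring

private lemma derivWithin_right_of_affine {f : ℝ → ℝ} {u v a b : ℝ} (huv : u < v)
    (h : ∀ y ∈ Set.Ico u v, f y = a * y + b) :
    derivWithin f (Set.Ici u) u = a := by
  have hmem : Set.Ico u v ∈ nhdsWithin u (Set.Ici u) :=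
    Ico_mem_nhdsGE_of_mem ⟨le_refl u, huv⟩
  have hlin : HasDerivWithinAt (fun y => a * y + b) a (Set.Ici u) u := by
    simpa using (((hasDerivAt_id u).const_mul a).add_const b).hasDerivWithinAt
  have H : HasDerivWithinAt f a (Set.Ici u) u :=
    hlin.congr_of_eventuallyEq (Filter.eventuallyEq_of_mem hmem (fun y hy => h y hy))
      (h u ⟨le_refl u, huv⟩)
  exact H.derivWithin (uniqueDiffOn_Ici u u Set.self_mem_Ici)

private lemma derivWithin_left_of_affine {f : ℝ → ℝ} {u v a b : ℝ} (huv : u < v)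
    (h : ∀ y ∈ Set.Ioc u v, f y = a * y + b) :
    derivWithin f (Set.Iic v) v = a := by
  have hmem : Set.Ioc u v ∈ nhdsWithin v (Set.Iic v) :=
    Ioc_mem_nhdsLE_of_mem ⟨huv, le_refl v⟩
  have hlin : HasDerivWithinAt (fun y => a * y + b) a (Set.Iic v) v := by
    simpa using (((hasDerivAt_id v).const_mul a).add_const b).hasDerivWithinAt
  have H : HasDerivWithinAt f a (Set.Iic v) v :=
    hlin.congr_of_eventuallyEq (Filter.eventuallyEq_of_mem hmem (fun y hy => h y hy))
      (h v ⟨huv, le_refl v⟩)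
  exact H.derivWithin (uniqueDiffOn_Iic v v Set.self_mem_Iic)

private lemma trop_struct {f : ℝ → ℝ} (hf : TropMero f) (x : ℝ) :
    ∃ ε > (0:ℝ),
      (∀ y ∈ Set.Ico x (x + ε), derivWithin f (Set.Ici y) y = derivWithin f (Set.Ici x) x) ∧
      (∀ y ∈ Set.Ioo x (x + ε), derivWithin f (Set.Iic y) y = derivWithin f (Set.Ici x) x) ∧
      (∀ y ∈ Set.Ioc (x - ε) x, derivWithin f (Set.Iic y) y = derivWithin f (Set.Iic x) x) ∧
      (∀ y ∈ Set.Ioo (x - ε) x, derivWithin f (Set.Ici y) y = derivWithin f (Set.Iic x) x) ∧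
      (∀ y ∈ Set.Ico x (x + ε), f y = f x + derivWithin f (Set.Ici x) x * (y - x)) ∧
      (∀ y ∈ Set.Ioc (x - ε) x, f y = f x + derivWithin f (Set.Iic x) x * (y - x)) := by
  obtain ⟨ε, hε, ⟨a, b, hab⟩, ⟨a', b', hab'⟩⟩ := hf.2 x
  have hxε : x < x + ε := by linarith
  have hxε' : x - ε < x := by linarith
  have hgr : derivWithin f (Set.Ici x) x = a := derivWithin_right_of_affine hxε hab
  have hgl : derivWithin f (Set.Iic x) x = a' := derivWithin_left_of_affine hxε' hab'
  refine ⟨ε, hε, ?_, ?_, ?_, ?_, ?_, ?_⟩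
  · intro y hy
    rw [hgr]
    exact derivWithin_right_of_affine hy.2 (fun z hz => hab z ⟨le_trans hy.1 hz.1, hz.2⟩)
  · intro y hy
    rw [hgr]
    exact derivWithin_left_of_affine hy.1
      (fun z hz => hab z ⟨le_of_lt hz.1, lt_of_le_of_lt hz.2 hy.2⟩)
  · intro y hy
    rw [hgl]
    exact derivWithin_left_of_affine hy.1 (fun z hz => hab' z ⟨hz.1, le_trans hz.2 hy.2⟩)
  · intro y hy
    rw [hgl]
    exact derivWithin_right_of_affine hy.2
      (fun z hz => hab' z ⟨lt_of_lt_of_le hy.1 hz.1, le_of_lt hz.2⟩)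
  · intro y hy
    rw [hgr, hab y hy, hab x ⟨le_refl x, hxε⟩]; ring
  · intro y hy
    rw [hgl, hab' y hy, hab' x ⟨hxε', le_refl x⟩]; ring

private lemma omega_zero_near {f : ℝ → ℝ} (hf : TropMero f) (x : ℝ) :
    ∃ ε > (0:ℝ), ∀ y ∈ Set.Ioo (x - ε) (x + ε), y ≠ x → omega f y = 0 := by
  obtain ⟨ε, hε, h1, h2, h3, h4, -, -⟩ := trop_struct hf x
  refine ⟨ε, hε, fun y hy hne => ?_⟩
  rcases lt_or_gt_of_ne hne with hlt | hgt
  · rw [omega, h4 y ⟨hy.1, hlt⟩, h3 y ⟨hy.1, le_of_lt hlt⟩]; ring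
  · rw [omega, h1 y ⟨le_of_lt hgt, hy.2⟩, h2 y ⟨hgt, hy.2⟩]; ring

private lemma finite_omega_support {f : ℝ → ℝ} (hf : TropMero f) (a b : ℝ) :
    {s : ℝ | s ∈ Set.Icc a b ∧ omega f s ≠ 0}.Finite := by
  choose ε hε hzero using fun x : ℝ => omega_zero_near hf x
  obtain ⟨T, hT⟩ := isCompact_Icc.elim_finite_subcover
      (fun x => Set.Ioo (x - ε x) (x + ε x)) (fun x => isOpen_Ioo)
      (fun y (_ : y ∈ Set.Icc a b) => Set.mem_iUnion.mpr
        ⟨y, ⟨by linarith [hε y], by linarith [hε y]⟩⟩)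
  refine Set.Finite.subset (T.finite_toSet.biUnion fun x _ => Set.finite_singleton x) ?_
  rintro s ⟨hs, hω⟩
  obtain ⟨x, hxT, hsx⟩ := Set.mem_iUnion₂.mp (hT hs)
  have hsx' : s = x := by
    by_contra hne
    exact hω (hzero x s hsx hne)
  exact Set.mem_biUnion hxT (by rw [hsx']; exact Set.mem_singleton x)

private lemma const_of_locally_const {g : ℝ → ℝ} {a b : ℝ} (hab : a ≤ b)
    (H : ∀ x ∈ Set.Icc a b, ∃ ε > (0:ℝ),
      (∀ y ∈ Set.Icc a b, x ≤ y → y < x + ε → g y = g x) ∧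
      (∀ y ∈ Set.Icc a b, x - ε < y → y ≤ x → g y = g x)) :
    g b = g a := by
  set S : Set ℝ := {x | x ∈ Set.Icc a b ∧ g x = g a} with hS
  have haS : a ∈ S := ⟨⟨le_refl a, hab⟩, rfl⟩
  have hbdd : BddAbove S := ⟨b, fun x hx => hx.1.2⟩
  set c := sSup S with hc
  have hac : a ≤ c := le_csSup hbdd haS
  have hcb : c ≤ b := csSup_le ⟨a, haS⟩ (fun x hx => hx.1.2)
  obtain ⟨ε, hε, hR, hL⟩ := H c ⟨hac, hcb⟩
  have hgc : g c = g a := by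
    obtain ⟨x, hxS, hxc⟩ := exists_lt_of_lt_csSup ⟨a, haS⟩ (show c - ε < c by linarith)
    have hxle : x ≤ c := le_csSup hbdd hxS
    rw [← hL x hxS.1 hxc hxle, hxS.2]
  rcases eq_or_lt_of_le hcb with heq | hlt
  · rw [← heq]; exact hgc
  · exfalso
    set y := min b (c + ε/2) with hy
    have hcy : c < y := lt_min hlt (by linarith)
    have hyI : y ∈ Set.Icc a b := ⟨le_trans hac (le_of_lt hcy), min_le_left _ _⟩
    have hgy : g y = g a := by
      rw [hR y hyI (le_of_lt hcy)
        (lt_of_le_of_lt (min_le_right _ _) (by linarith)), hgc]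
    have : y ≤ c := le_csSup hbdd ⟨hyI, hgy⟩
    linarith

private lemma sum_omega {f : ℝ → ℝ} (hf : TropMero f) {a b : ℝ} (hab : a ≤ b)
    (F : Finset ℝ) (hF : ∀ s, s ∈ F ↔ s ∈ Set.Icc a b ∧ omega f s ≠ 0) :
    ∑ s ∈ F, omega f s = derivWithin f (Set.Ici b) b - derivWithin f (Set.Iic a) a := by
  classical
  set Ψ : ℝ → ℝ :=
    fun x => derivWithin f (Set.Ici x) x - ∑ s ∈ F.filter (fun s => s ≤ x), omega f s with hΨ
  have key : Ψ b = Ψ a := by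
    apply const_of_locally_const hab
    intro x hx
    obtain ⟨ε, hε, h1, h2, h3, h4, -, -⟩ := trop_struct hf x
    refine ⟨ε, hε, ?_, ?_⟩
    · intro y _ hxy hyε
      have hgr : derivWithin f (Set.Ici y) y = derivWithin f (Set.Ici x) x := h1 y ⟨hxy, hyε⟩
      have hfun : F.filter (fun s => s ≤ y) = F.filter (fun s => s ≤ x) := by
        ext s
        simp only [Finset.mem_filter]
        constructor
        · rintro ⟨hsF, hsy⟩
          refine ⟨hsF, ?_⟩
          by_contra hsx
          push_neg at hsx
          have hio : s ∈ Set.Ioo x (x + ε) := ⟨hsx, lt_of_le_of_lt hsy hyε⟩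
          have hs0 : omega f s = 0 := by
            rw [omega, h1 s ⟨le_of_lt hsx, hio.2⟩, h2 s hio]; ring
          exact ((hF s).mp hsF).2 hs0
        · rintro ⟨hsF, hsx⟩; exact ⟨hsF, le_trans hsx hxy⟩
      simp only [hΨ]
      rw [hgr, hfun]
    · intro y _ hyx hxy
      rcases eq_or_lt_of_le hxy with heq | hlt
      · rw [heq]
      · have hgr : derivWithin f (Set.Ici y) y = derivWithin f (Set.Iic x) x := h4 y ⟨hyx, hlt⟩
        have hsum : ∑ s ∈ F.filter (fun s => s ≤ x), omega f s
            = (∑ s ∈ F.filter (fun s => s ≤ y), omega f s) + omega f x := by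
          rw [← Finset.sum_filter_add_sum_filter_not
            (F.filter (fun s => s ≤ x)) (fun s => s ≤ y) (omega f)]
          congr 1
          · apply Finset.sum_congr _ (fun _ _ => rfl)
            ext s
            constructor
            · intro hs
              have h1 := Finset.mem_filter.mp hs
              exact Finset.mem_filter.mpr ⟨(Finset.mem_filter.mp h1.1).1, h1.2⟩
            · intro hs
              have h1 := Finset.mem_filter.mp hs
              exact Finset.mem_filter.mpr
                ⟨Finset.mem_filter.mpr ⟨h1.1, le_trans h1.2 hxy⟩, h1.2⟩
          · have hsub : (F.filter (fun s => s ≤ x)).filter (fun s => ¬ s ≤ y) ⊆ {x} := by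
              intro s hs
              simp only [Finset.mem_filter] at hs
              obtain ⟨⟨hsF, hsx⟩, hsy⟩ := hs
              push_neg at hsy
              rcases eq_or_lt_of_le hsx with heq2 | hslt
              · rw [heq2]; exact Finset.mem_singleton_self x
              · exfalso
                have hio : s ∈ Set.Ioo (x - ε) x := ⟨lt_trans hyx hsy, hslt⟩
                have hs0 : omega f s = 0 := by
                  rw [omega, h4 s hio, h3 s ⟨hio.1, le_of_lt hslt⟩]; ring
                exact ((hF s).mp hsF).2 hs0
            rcases Finset.subset_singleton_iff.mp hsub with h0 | h1'
            · rw [h0, Finset.sum_empty]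
              by_contra hne
              have hxF : x ∈ F := (hF x).mpr ⟨hx, fun h => hne h.symm⟩
              have : x ∈ (F.filter (fun s => s ≤ x)).filter (fun s => ¬ s ≤ y) := by
                simp only [Finset.mem_filter]
                exact ⟨⟨hxF, le_refl x⟩, not_le.mpr hlt⟩
              rw [h0] at this
              exact absurd this (Finset.notMem_empty x)
            · rw [h1', Finset.sum_singleton]
        simp only [hΨ]
        rw [hgr, hsum, omega]
        ring
  have hFb : F.filter (fun s => s ≤ b) = F :=
    Finset.filter_true_of_mem (fun s hs => ((hF s).mp hs).1.2)
  have hFa : ∑ s ∈ F.filter (fun s => s ≤ a), omega f s = omega f a := by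
    have hsub : F.filter (fun s => s ≤ a) ⊆ {a} := by
      intro s hs
      simp only [Finset.mem_filter] at hs
      exact Finset.mem_singleton.mpr (le_antisymm hs.2 ((hF s).mp hs.1).1.1)
    rcases Finset.subset_singleton_iff.mp hsub with h0 | h1
    · rw [h0, Finset.sum_empty]
      by_contra hne
      have haF : a ∈ F := (hF a).mpr ⟨⟨le_refl a, hab⟩, fun h => hne h.symm⟩
      have : a ∈ F.filter (fun s => s ≤ a) := Finset.mem_filter.mpr ⟨haF, le_refl a⟩
      rw [h0] at this
      exact absurd this (Finset.notMem_empty a)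
    · rw [h1, Finset.sum_singleton]
  simp only [hΨ] at key
  rw [hFb, hFa] at key
  simp only [omega] at key ⊢
  linarith

private lemma omega_neg (f : ℝ → ℝ) (x : ℝ) : omega (fun y => -f y) x = -omega f x := by
  show derivWithin (-f) (Set.Ici x) x - derivWithin (-f) (Set.Iic x) x = -omega f x
  rw [omega, derivWithin.neg, derivWithin.neg]
  ring

private lemma TropMero.neg {f : ℝ → ℝ} (hf : TropMero f) : TropMero (fun x => -f x) := by
  refine ⟨hf.1.neg, fun x => ?_⟩
  obtain ⟨ε, hε, ⟨a, b, hab⟩, ⟨a', b', hab'⟩⟩ := hf.2 x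
  exact ⟨ε, hε, ⟨-a, -b, fun y hy => by simp only [hab y hy]; ring⟩,
    ⟨-a', -b', fun y hy => by simp only [hab' y hy]; ring⟩⟩

private lemma nCount_eq {g : ℝ → ℝ} {t r : ℝ} (htr : t ≤ r)
    (F : Finset ℝ) (hF : ∀ s, s ∈ F ↔ s ∈ Set.Icc (-r) r ∧ omega g s ≠ 0) :
    nCount g t = ∑ s ∈ F.filter (fun s => |s| ≤ t ∧ omega g s < 0), |omega g s| := by
  classical
  have hfin : ({s : ℝ | |s| ≤ t ∧ omega g s < 0} ∩
      Function.support fun s => |omega g s|).Finite := by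
    apply F.finite_toSet.subset
    rintro s ⟨⟨hst, hs0⟩, -⟩
    exact (hF s).mpr ⟨Set.mem_Icc.mpr (abs_le.mp (le_trans hst htr)), ne_of_lt hs0⟩
  rw [nCount, finsum_mem_eq_sum _ hfin]
  apply Finset.sum_congr _ (fun _ _ => rfl)
  ext s
  simp only [Set.Finite.mem_toFinset, Set.mem_inter_iff, Set.mem_setOf_eq,
    Function.mem_support, Finset.mem_filter]
  constructor
  · rintro ⟨⟨hst, hs0⟩, -⟩
    exact ⟨(hF s).mpr ⟨Set.mem_Icc.mpr (abs_le.mp (le_trans hst htr)), ne_of_lt hs0⟩, hst, hs0⟩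
  · rintro ⟨-, hst, hs0⟩
    exact ⟨⟨hst, hs0⟩, abs_ne_zero.mpr (ne_of_lt hs0)⟩

private lemma nCount_monoOn {g : ℝ → ℝ} (hg : TropMero g) (r : ℝ) :
    MonotoneOn (nCount g) (Set.Icc 0 r) := by
  classical
  intro t1 h1 t2 h2 h12
  have hFmem : ∀ s, s ∈ (finite_omega_support hg (-r) r).toFinset ↔
      s ∈ Set.Icc (-r) r ∧ omega g s ≠ 0 := by
    intro s
    rw [Set.Finite.mem_toFinset]
    exact Iff.rfl
  rw [nCount_eq h1.2 _ hFmem, nCount_eq h2.2 _ hFmem]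
  apply Finset.sum_le_sum_of_subset_of_nonneg
  · intro s hs
    simp only [Finset.mem_filter] at hs ⊢
    exact ⟨hs.1, le_trans hs.2.1 h12, hs.2.2⟩
  · intro s _ _
    exact abs_nonneg _

private lemma nCount_diff {f : ℝ → ℝ} (hf : TropMero f) {t : ℝ} (ht : 0 ≤ t) :
    nCount f t - nCount (fun x => -f x) t
      = derivWithin f (Set.Iic (-t)) (-t) - derivWithin f (Set.Ici t) t := by
  classical
  have hFmem : ∀ s, s ∈ (finite_omega_support hf (-t) t).toFinset ↔
      s ∈ Set.Icc (-t) t ∧ omega f s ≠ 0 := by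
    intro s
    rw [Set.Finite.mem_toFinset]
    exact Iff.rfl
  set F := (finite_omega_support hf (-t) t).toFinset with hFdef
  have h1 : nCount f t = ∑ s ∈ F.filter (fun s => |s| ≤ t ∧ omega f s < 0), |omega f s| :=
    nCount_eq le_rfl F hFmem
  have hFmem' : ∀ s, s ∈ F ↔ s ∈ Set.Icc (-t) t ∧ omega (fun x => -f x) s ≠ 0 := by
    intro s
    rw [hFmem s, omega_neg]
    simp [neg_eq_zero]
  have h2 : nCount (fun x => -f x) t = ∑ s ∈ F.filter
      (fun s => |s| ≤ t ∧ omega (fun x => -f x) s < 0), |omega (fun x => -f x) s| :=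
    nCount_eq le_rfl F hFmem'
  have h2' : nCount (fun x => -f x) t
      = ∑ s ∈ F.filter (fun s => |s| ≤ t ∧ 0 < omega f s), |omega f s| := by
    rw [h2]
    have hfe : F.filter (fun s => |s| ≤ t ∧ omega (fun x => -f x) s < 0)
        = F.filter (fun s => |s| ≤ t ∧ 0 < omega f s) := by
      ext s
      simp only [Finset.mem_filter, omega_neg, neg_lt_zero]
    rw [hfe]
    exact Finset.sum_congr rfl (fun s _ => by rw [omega_neg, abs_neg])
  have hfull : ∀ s ∈ F, |s| ≤ t := fun s hs =>
    abs_le.mpr (Set.mem_Icc.mp ((hFmem s).mp hs).1)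
  have e1 : F.filter (fun s => |s| ≤ t ∧ omega f s < 0) = F.filter (fun s => omega f s < 0) := by
    ext s
    simp only [Finset.mem_filter]
    exact ⟨fun h => ⟨h.1, h.2.2⟩, fun h => ⟨h.1, hfull s h.1, h.2⟩⟩
  have e2 : F.filter (fun s => |s| ≤ t ∧ 0 < omega f s)
      = F.filter (fun s => ¬ omega f s < 0) := by
    ext s
    simp only [Finset.mem_filter]
    constructor
    · rintro ⟨hs, -, h0⟩
      exact ⟨hs, not_lt.mpr (le_of_lt h0)⟩
    · rintro ⟨hs, h0⟩
      exact ⟨hs, hfull s hs, lt_of_le_of_ne (not_lt.mp h0) (Ne.symm ((hFmem s).mp hs).2)⟩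
  have g1 : ∑ s ∈ F.filter (fun s => omega f s < 0), |omega f s|
      = -∑ s ∈ F.filter (fun s => omega f s < 0), omega f s := by
    rw [← Finset.sum_neg_distrib]
    exact Finset.sum_congr rfl (fun s hs => abs_of_neg (Finset.mem_filter.mp hs).2)
  have g2 : ∑ s ∈ F.filter (fun s => ¬ omega f s < 0), |omega f s|
      = ∑ s ∈ F.filter (fun s => ¬ omega f s < 0), omega f s :=
    Finset.sum_congr rfl (fun s hs => abs_of_nonneg (not_lt.mp (Finset.mem_filter.mp hs).2))
  have hsum : ∑ s ∈ F, omega f s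
      = derivWithin f (Set.Ici t) t - derivWithin f (Set.Iic (-t)) (-t) :=
    sum_omega hf (by linarith) F hFmem
  have hsplit := Finset.sum_filter_add_sum_filter_not F (fun s => omega f s < 0) (omega f)
  rw [h1, h2', e1, e2, g1, g2]
  linarith

private lemma hasDeriv_w {f : ℝ → ℝ} (hf : TropMero f) (t : ℝ) :
    HasDerivWithinAt (fun u => -f u - f (-u))
      (derivWithin f (Set.Iic (-t)) (-t) - derivWithin f (Set.Ici t) t) (Set.Ioi t) t := by
  obtain ⟨ε, hε, -, -, -, -, hval, -⟩ := trop_struct hf t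
  obtain ⟨ε', hε', -, -, -, -, -, hval'⟩ := trop_struct hf (-t)
  have h1 : HasDerivWithinAt f (derivWithin f (Set.Ici t) t) (Set.Ioi t) t := by
    have hm : Set.Ioo t (t + ε) ∈ nhdsWithin t (Set.Ioi t) :=
      Ioo_mem_nhdsGT_of_mem ⟨le_refl t, by linarith⟩
    have hlin : HasDerivWithinAt (fun y => f t + derivWithin f (Set.Ici t) t * (y - t))
        (derivWithin f (Set.Ici t) t) (Set.Ioi t) t := by
      simpa using ((((hasDerivAt_id t).sub_const t).const_mul
        (derivWithin f (Set.Ici t) t)).const_add (f t)).hasDerivWithinAt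
    refine hlin.congr_of_eventuallyEq ?_ (by ring)
    exact Filter.eventuallyEq_of_mem hm (fun y hy => hval y ⟨le_of_lt hy.1, hy.2⟩)
  have h2 : HasDerivWithinAt (fun u => f (-u))
      (-(derivWithin f (Set.Iic (-t)) (-t))) (Set.Ioi t) t := by
    have hm : Set.Ioo t (t + ε') ∈ nhdsWithin t (Set.Ioi t) :=
      Ioo_mem_nhdsGT_of_mem ⟨le_refl t, by linarith⟩
    have hlin : HasDerivWithinAt
        (fun u => f (-t) + derivWithin f (Set.Iic (-t)) (-t) * (-u - (-t)))
        (-(derivWithin f (Set.Iic (-t)) (-t))) (Set.Ioi t) t := by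
      have hd : HasDerivAt (fun u : ℝ => f (-t) + derivWithin f (Set.Iic (-t)) (-t) * (-u - (-t)))
          (derivWithin f (Set.Iic (-t)) (-t) * (-1)) t :=
        (((hasDerivAt_id t).neg.sub_const (-t)).const_mul _).const_add _
      simpa using hd.hasDerivWithinAt
    refine hlin.congr_of_eventuallyEq ?_ (by ring)
    refine Filter.eventuallyEq_of_mem hm (fun y hy => ?_)
    have hmem : -y ∈ Set.Ioc (-t - ε') (-t) := ⟨by linarith [hy.2], by linarith [hy.1]⟩
    rw [hval' (-y) hmem]
  have := (h1.neg).sub h2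
  exact this.congr_deriv (by ring)

end JensenAux

/-- Tropical Jensen formula: for any tropical meromorphic function `f`,
`T(r, f) − T(r, 1∘ ⊘ f) = f(0)` for all `r ≥ 0`, where `1∘ ⊘ f = −f`. -/
theorem tropical_jensen_formula (f : ℝ → ℝ) (hf : TropMero f) :
    ∀ r : ℝ, 0 ≤ r → Tchar f r - Tchar (fun x => -f x) r = f 0 := by
  intro r hr
  have hm : mProx f r - mProx (fun x => -f x) r = (f r + f (-r)) / 2 := by
    simp only [mProx]
    have h1 := max_sub_max_neg (f r)
    have h2 := max_sub_max_neg (f (-r))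
    linarith
  have hmono1 : MonotoneOn (nCount f) (Set.uIcc 0 r) := by
    rw [Set.uIcc_of_le hr]; exact nCount_monoOn hf r
  have hmono2 : MonotoneOn (nCount (fun x => -f x)) (Set.uIcc 0 r) := by
    rw [Set.uIcc_of_le hr]; exact nCount_monoOn (TropMero.neg hf) r
  have hint1 : IntervalIntegrable (nCount f) MeasureTheory.volume 0 r :=
    hmono1.intervalIntegrable
  have hint2 : IntervalIntegrable (nCount (fun x => -f x)) MeasureTheory.volume 0 r :=
    hmono2.intervalIntegrable
  have hcont : ContinuousOn (fun u => -f u - f (-u)) (Set.Icc 0 r) := by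
    apply Continuous.continuousOn
    exact (hf.1.neg).sub (hf.1.comp continuous_neg)
  have hftc : ∫ t in (0:ℝ)..r, (nCount f t - nCount (fun x => -f x) t)
      = (-f r - f (-r)) - (-f 0 - f (-0)) := by
    apply intervalIntegral.integral_eq_sub_of_hasDeriv_right_of_le hr hcont
    · intro x hx
      rw [nCount_diff hf (le_of_lt hx.1)]
      exact hasDeriv_w hf x
    · exact hint1.sub hint2
  rw [neg_zero] at hftc
  have hNN : NCount f r - NCount (fun x => -f x) r
      = (1/2) * ((-f r - f (-r)) - (-f 0 - f 0)) := by
    rw [NCount, NCount, ← mul_sub, ← intervalIntegral.integral_sub hint1 hint2, hftc]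
  simp only [Tchar]
  linarith
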